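/- Let q be a prime power, w an odd prime, and suppose rad(n) | q^w - 1 with 8 | n and q ≡ 3 (mod 4). Set r = min(v₂(n/2), v₂(q+1)). Then n/gcd(n, q^{2w}-1) = (n/gcd(n, q^w-1)) / 2^r, i.e., m_{2w} = m_w / 2^r. -/
import Mathlib

open Finset in
lemma aux_v2_pow_add_one (q w : ℕ) (hq : q % 2 = 1) (hw : Odd w) :
    (q ^ w + 1).factorization 2 = (q + 1).factorization 2 := by
  have hdvd : (q + 1) ∣ q ^ w + 1 := by
    simpa using Odd.nat_add_dvd_pow_add_pow q 1 hw
  obtain ⟨s, hs⟩ := hdvd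
  set S : ℤ := ∑ i ∈ range w, (q : ℤ) ^ i * (-1) ^ (w - 1 - i) with hS
  have hgeom : S * ((q : ℤ) + 1) = (q : ℤ) ^ w + 1 := by
    have := geom_sum₂_mul (q : ℤ) (-1) w
    rw [hw.neg_one_pow] at this
    simpa using this
  have hSs : S = (s : ℤ) := by
    have h1 : S * ((q : ℤ) + 1) = (s : ℤ) * ((q : ℤ) + 1) := by
      rw [hgeom, mul_comm]
      exact_mod_cast hs
    have h2 : ((q : ℤ) + 1) ≠ 0 := by positivity
    exact mul_right_cancel₀ h2 h1
  have hsodd : ¬ 2 ∣ s := by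
    intro h2s
    have h0 : ((s : ℤ) : ZMod 2) = 0 := by
      rw [show ((s : ℤ) : ZMod 2) = ((s : ℕ) : ZMod 2) by push_cast; ring]
      exact (ZMod.natCast_eq_zero_iff s 2).mpr h2s
    rw [← hSs, hS] at h0
    push_cast at h0
    have hq1 : ((q : ℕ) : ZMod 2) = 1 := by
      rw [← ZMod.natCast_mod q 2, hq]; rfl
    rw [hq1] at h0
    have hneg : (-1 : ZMod 2) = 1 := by decide
    rw [hneg] at h0
    simp only [one_pow, one_mul, Finset.sum_const, Finset.card_range, nsmul_eq_mul,
      mul_one] at h0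
    have h2w : (2 : ℕ) ∣ w := (ZMod.natCast_eq_zero_iff w 2).mp h0
    rw [Nat.odd_iff] at hw
    omega
  have hs0 : s ≠ 0 := by
    intro h; rw [h] at hs; simp at hs
  rw [hs, Nat.factorization_mul (by omega) hs0]
  simp [Nat.factorization_eq_zero_of_not_dvd hsodd]

theorem stmt_15 (q w n r : ℕ) (hq : IsPrimePow q) (hw : w.Prime) (hodd : Odd w)
    (hn : 0 < n) (hrad : n.primeFactors.prod id ∣ (q ^ w - 1))
    (h8 : 8 ∣ n) (hq3 : q % 4 = 3)
    (hr : r = min ((n / 2).factorization 2) ((q + 1).factorization 2)) :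
    n / Nat.gcd n (q ^ (2 * w) - 1) = (n / Nat.gcd n (q ^ w - 1)) / 2 ^ r := by
  have hq2 : q % 2 = 1 := by omega
  have ha3 : q ^ w % 4 = 3 := by
    obtain ⟨k, hk⟩ := hodd
    rw [hk, Nat.pow_mod, hq3, pow_succ, pow_mul, Nat.mul_mod, Nat.pow_mod]
    norm_num
  obtain ⟨A, hA⟩ : ∃ A, q ^ w = A + 1 := ⟨q ^ w - 1, by omega⟩
  have hA1 : q ^ w - 1 = A := by omega
  rw [hA1] at hrad ⊢
  set B := A + 2 with hB
  have hA4 : A % 4 = 2 := by omega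
  have hABa : q ^ (2 * w) - 1 = A * B := by
    have h1 : q ^ (2 * w) = (A + 1) * (A + 1) := by
      rw [mul_comm, pow_mul, hA]; ring
    have h2 : (A + 1) * (A + 1) = A * B + 1 := by rw [hB]; ring
    omega
  have hn0 : n ≠ 0 := hn.ne'
  have hA0 : A ≠ 0 := by omega
  have hB0 : B ≠ 0 := by omega
  have hfA2 : A.factorization 2 = 1 := by
    obtain ⟨c, hc, hcodd⟩ : ∃ c, A = 2 * c ∧ c % 2 = 1 := ⟨A / 2, by omega, by omega⟩
    rw [hc, Nat.factorization_mul two_ne_zero (by omega),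
      Nat.Prime.factorization Nat.prime_two]
    simp [Nat.factorization_eq_zero_of_not_dvd (show ¬ 2 ∣ c by omega)]
  have hfB2 : B.factorization 2 = (q + 1).factorization 2 := by
    rw [show B = q ^ w + 1 by omega]
    exact aux_v2_pow_add_one q w hq2 hodd
  have hfn2 : 3 ≤ n.factorization 2 :=
    (Nat.Prime.pow_dvd_iff_le_factorization Nat.prime_two hn0).mp (by norm_num; exact h8)
  have hfn2' : (n / 2).factorization 2 = n.factorization 2 - 1 := by
    have h2n : 2 ∣ n := by omega
    have hn2 : n = 2 * (n / 2) := (Nat.mul_div_cancel' h2n).symm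
    have hstep : n.factorization 2 = 1 + (n / 2).factorization 2 := by
      nth_rewrite 1 [hn2]
      rw [Nat.factorization_mul two_ne_zero (by omega),
        Nat.Prime.factorization Nat.prime_two]
      simp
    omega
  have hr' : r = min (n.factorization 2 - 1) ((q + 1).factorization 2) := by
    rw [hr, hfn2']
  have h2rf : ∀ p : ℕ, (2 ^ r).factorization p = if 2 = p then r else 0 := by
    intro p
    rw [Nat.Prime.factorization_pow Nat.prime_two, Finsupp.single_apply]
  have key : Nat.gcd n (A * B) = Nat.gcd n A * 2 ^ r := by
    have hgcd1 : Nat.gcd n (A * B) ≠ 0 := Nat.gcd_ne_zero_left hn0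
    have hgcd2 : Nat.gcd n A ≠ 0 := Nat.gcd_ne_zero_left hn0
    apply Nat.eq_of_factorization_eq hgcd1 (mul_ne_zero hgcd2 (pow_ne_zero _ two_ne_zero))
    intro p
    rw [Nat.factorization_gcd hn0 (mul_ne_zero hA0 hB0),
      Nat.factorization_mul hgcd2 (pow_ne_zero _ two_ne_zero),
      Nat.factorization_gcd hn0 hA0, Nat.factorization_mul hA0 hB0]
    simp only [Finsupp.inf_apply, Finsupp.add_apply, Finsupp.coe_add, Pi.add_apply, h2rf]
    by_cases hp : p.Prime
    · by_cases hp2 : p = 2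
      · subst hp2
        rw [hfA2, hfB2, if_pos rfl]
        omega
      · rw [if_neg (Ne.symm hp2)]
        by_cases hpn : p ∣ n
        · have hpA : p ∣ A :=
            dvd_trans (Finset.dvd_prod_of_mem id
              (Nat.mem_primeFactors.mpr ⟨hp, hpn, hn0⟩)) hrad
          have hpB : ¬ p ∣ B := by
            intro hpB
            have h2 : p ∣ 2 := by
              have := Nat.dvd_sub hpB hpA
              rwa [show B - A = 2 by omega] at this
            exact hp2 ((Nat.prime_dvd_prime_iff_eq hp Nat.prime_two).mp h2)
          rw [Nat.factorization_eq_zero_of_not_dvd hpB]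
          omega
        · rw [Nat.factorization_eq_zero_of_not_dvd hpn]
          omega
    · have h2p : ¬ (2 = p) := fun h => hp (h ▸ Nat.prime_two)
      rw [if_neg h2p]
      simp [Nat.factorization_eq_zero_of_not_prime _ hp]
  rw [hABa, key, ← Nat.div_div_eq_div_mul]
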